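/- Let H and K be Hilbert spaces and let Λ₁, Λ₂ : H → K be bounded linear operators. For j = 1,2 let 𝒞_j := { (f, Λ_j f) : f ∈ H } ⊂ H × K be the graph of Λ_j, and equip H × K with the norm ‖(f,g)‖ := (‖f‖_H² + ‖g‖_K²)^{1/2}. Define dist(𝒞₁, 𝒞₂) := max{ sup_{0 ≠ (f₁,g₁) ∈ 𝒞₁} inf_{(f₂,g₂) ∈ 𝒞₂} ‖(f₁−f₂, g₁−g₂)‖ / ‖(f₁,g₁)‖ , sup_{0 ≠ (f₂,g₂) ∈ 𝒞₂} inf_{(f₁,g₁) ∈ 𝒞₁} ‖(f₁−f₂, g₁−g₂)‖ / ‖(f₂,g₂)‖ }. Then ‖Λ₁ − Λ₂‖ / ( √(1 + ‖Λ₁‖²) · √(1 + ‖Λ₂‖²) ) ≤ dist(𝒞₁, 𝒞₂) ≤ ‖Λ₁ − Λ₂‖, where ‖·‖ on operators denotes the operator norm from H to K. -/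
import Mathlib


open scoped Topology

noncomputable section

/-- The norm `‖(f,g)‖ = (‖f‖² + ‖g‖²)^{1/2}` on `H × K`. -/
def pairNorm {H K : Type*} [NormedAddCommGroup H] [NormedAddCommGroup K]
    (f : H) (g : K) : ℝ :=
  Real.sqrt (‖f‖ ^ 2 + ‖g‖ ^ 2)

/-- The (normalized, symmetrized) distance between the graphs
`𝒞_j = {(f, Λ_j f)}` of two bounded operators. A nonzero element of `𝒞_j`
corresponds exactly to `f ≠ 0`. -/
def graphDist {H K : Type*} [NormedAddCommGroup H] [InnerProductSpace ℝ H]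
    [NormedAddCommGroup K] [InnerProductSpace ℝ K]
    (Λ₁ Λ₂ : H →L[ℝ] K) : ℝ :=
  max
    (⨆ f₁ : {x : H // x ≠ 0}, ⨅ f₂ : H,
      pairNorm ((f₁ : H) - f₂) (Λ₁ (f₁ : H) - Λ₂ f₂) / pairNorm (f₁ : H) (Λ₁ (f₁ : H)))
    (⨆ f₂ : {x : H // x ≠ 0}, ⨅ f₁ : H,
      pairNorm (f₁ - (f₂ : H)) (Λ₁ f₁ - Λ₂ (f₂ : H)) / pairNorm (f₂ : H) (Λ₂ (f₂ : H)))

set_option linter.unusedSectionVars false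

section Aux

variable {H K : Type*} [NormedAddCommGroup H] [InnerProductSpace ℝ H]
  [NormedAddCommGroup K] [InnerProductSpace ℝ K]

lemma pairNorm_nonneg (f : H) (g : K) : 0 ≤ pairNorm f g := Real.sqrt_nonneg _

lemma scalar_aux (a b c : ℝ) (ha : 0 ≤ a) (hb : 0 ≤ b) (hc : 0 ≤ c) :
    a + c * b ≤ Real.sqrt (1 + c ^ 2) * Real.sqrt (b ^ 2 + a ^ 2) := by
  rw [← Real.sqrt_mul (by positivity)]
  rw [show a + c * b = Real.sqrt ((a + c * b) ^ 2) from (Real.sqrt_sq (by positivity)).symm]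
  apply Real.sqrt_le_sqrt
  nlinarith [sq_nonneg (b - c * a)]

lemma aux_key (T : H →L[ℝ] K) (v : H) (u : K) :
    ‖u - T v‖ ≤ Real.sqrt (1 + ‖T‖ ^ 2) * pairNorm v u := by
  have h1 : ‖u - T v‖ ≤ ‖u‖ + ‖T‖ * ‖v‖ := by
    refine (norm_sub_le _ _).trans ?_
    gcongr
    exact T.le_opNorm v
  exact h1.trans (scalar_aux ‖u‖ ‖v‖ ‖T‖ (norm_nonneg _) (norm_nonneg _) (norm_nonneg _))

lemma pairNorm_graph_le (T : H →L[ℝ] K) (f : H) :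
    pairNorm f (T f) ≤ ‖f‖ * Real.sqrt (1 + ‖T‖ ^ 2) := by
  rw [pairNorm, show ‖f‖ * Real.sqrt (1 + ‖T‖ ^ 2)
      = Real.sqrt (‖f‖ ^ 2 * (1 + ‖T‖ ^ 2)) by
    rw [Real.sqrt_mul (by positivity), Real.sqrt_sq (norm_nonneg _)]]
  apply Real.sqrt_le_sqrt
  have := T.le_opNorm f
  nlinarith [norm_nonneg (T f), norm_nonneg f, T.opNorm_nonneg]

lemma norm_le_pairNorm_graph (T : H →L[ℝ] K) (f : H) : ‖f‖ ≤ pairNorm f (T f) :=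
  calc ‖f‖ = Real.sqrt (‖f‖ ^ 2) := (Real.sqrt_sq (norm_nonneg _)).symm
    _ ≤ pairNorm f (T f) := Real.sqrt_le_sqrt (by nlinarith [sq_nonneg ‖T f‖])

lemma pairNorm_zero_left (g : K) : pairNorm (0 : H) g = ‖g‖ := by
  simp [pairNorm, Real.sqrt_sq (norm_nonneg g)]

end Aux

/-- the two-sided comparison between the normalized graph distance of
the Cauchy data sets (graphs) of two bounded operators between Hilbert spaces and
their operator-norm distance:
`‖Λ₁−Λ₂‖/(√(1+‖Λ₁‖²)·√(1+‖Λ₂‖²)) ≤ dist(𝒞₁,𝒞₂) ≤ ‖Λ₁−Λ₂‖`. -/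
theorem statement14 {H K : Type*} [NormedAddCommGroup H] [InnerProductSpace ℝ H]
    [CompleteSpace H] [NormedAddCommGroup K] [InnerProductSpace ℝ K]
    [CompleteSpace K] (Λ₁ Λ₂ : H →L[ℝ] K) :
    ‖Λ₁ - Λ₂‖ / (Real.sqrt (1 + ‖Λ₁‖ ^ 2) * Real.sqrt (1 + ‖Λ₂‖ ^ 2))
        ≤ graphDist Λ₁ Λ₂ ∧
      graphDist Λ₁ Λ₂ ≤ ‖Λ₁ - Λ₂‖ := by
  set C₁ := Real.sqrt (1 + ‖Λ₁‖ ^ 2) with hC₁def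
  set C₂ := Real.sqrt (1 + ‖Λ₂‖ ^ 2) with hC₂def
  have hC₁pos : 0 < C₁ := Real.sqrt_pos.mpr (by positivity)
  have hC₂pos : 0 < C₂ := Real.sqrt_pos.mpr (by positivity)
  by_cases hH : Nonempty {x : H // x ≠ 0}
  · -- main case
    have hterm₁ : ∀ f₁ : {x : H // x ≠ 0},
        (⨅ f₂ : H, pairNorm ((f₁ : H) - f₂) (Λ₁ (f₁ : H) - Λ₂ f₂)
          / pairNorm (f₁ : H) (Λ₁ (f₁ : H))) ≤ ‖Λ₁ - Λ₂‖ := by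
      intro f₁
      have hbdd : BddBelow (Set.range fun f₂ : H =>
          pairNorm ((f₁ : H) - f₂) (Λ₁ (f₁ : H) - Λ₂ f₂)
            / pairNorm (f₁ : H) (Λ₁ (f₁ : H))) := by
        refine ⟨0, ?_⟩
        rintro x ⟨f₂, rfl⟩
        exact div_nonneg (pairNorm_nonneg _ _) (pairNorm_nonneg _ _)
      refine (ciInf_le hbdd (f₁ : H)).trans ?_
      have hfpos : (0:ℝ) < ‖(f₁ : H)‖ := norm_pos_iff.mpr f₁.2
      have hden : (0:ℝ) < pairNorm (f₁ : H) (Λ₁ (f₁ : H)) :=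
        lt_of_lt_of_le hfpos (norm_le_pairNorm_graph Λ₁ _)
      rw [div_le_iff₀ hden]
      have h1 : pairNorm ((f₁ : H) - (f₁ : H)) (Λ₁ (f₁ : H) - Λ₂ (f₁ : H))
          = ‖(Λ₁ - Λ₂) (f₁ : H)‖ := by
        simp [pairNorm_zero_left, ContinuousLinearMap.sub_apply]
      rw [h1]
      calc ‖(Λ₁ - Λ₂) (f₁ : H)‖ ≤ ‖Λ₁ - Λ₂‖ * ‖(f₁ : H)‖ := (Λ₁ - Λ₂).le_opNorm _
        _ ≤ ‖Λ₁ - Λ₂‖ * pairNorm (f₁ : H) (Λ₁ (f₁ : H)) :=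
            mul_le_mul_of_nonneg_left (norm_le_pairNorm_graph Λ₁ _) (norm_nonneg _)
    have hterm₂ : ∀ f₂ : {x : H // x ≠ 0},
        (⨅ f₁ : H, pairNorm (f₁ - (f₂ : H)) (Λ₁ f₁ - Λ₂ (f₂ : H))
          / pairNorm (f₂ : H) (Λ₂ (f₂ : H))) ≤ ‖Λ₁ - Λ₂‖ := by
      intro f₂
      have hbdd : BddBelow (Set.range fun f₁ : H =>
          pairNorm (f₁ - (f₂ : H)) (Λ₁ f₁ - Λ₂ (f₂ : H))
            / pairNorm (f₂ : H) (Λ₂ (f₂ : H))) := by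
        refine ⟨0, ?_⟩
        rintro x ⟨f₁, rfl⟩
        exact div_nonneg (pairNorm_nonneg _ _) (pairNorm_nonneg _ _)
      refine (ciInf_le hbdd (f₂ : H)).trans ?_
      have hfpos : (0:ℝ) < ‖(f₂ : H)‖ := norm_pos_iff.mpr f₂.2
      have hden : (0:ℝ) < pairNorm (f₂ : H) (Λ₂ (f₂ : H)) :=
        lt_of_lt_of_le hfpos (norm_le_pairNorm_graph Λ₂ _)
      rw [div_le_iff₀ hden]
      have h1 : pairNorm ((f₂ : H) - (f₂ : H)) (Λ₁ (f₂ : H) - Λ₂ (f₂ : H))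
          = ‖(Λ₁ - Λ₂) (f₂ : H)‖ := by
        simp [pairNorm_zero_left, ContinuousLinearMap.sub_apply]
      rw [h1]
      calc ‖(Λ₁ - Λ₂) (f₂ : H)‖ ≤ ‖Λ₁ - Λ₂‖ * ‖(f₂ : H)‖ := (Λ₁ - Λ₂).le_opNorm _
        _ ≤ ‖Λ₁ - Λ₂‖ * pairNorm (f₂ : H) (Λ₂ (f₂ : H)) :=
            mul_le_mul_of_nonneg_left (norm_le_pairNorm_graph Λ₂ _) (norm_nonneg _)
    have hub : graphDist Λ₁ Λ₂ ≤ ‖Λ₁ - Λ₂‖ :=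
      max_le (ciSup_le hterm₁) (ciSup_le hterm₂)
    refine ⟨?_, hub⟩
    -- lower bound
    have hgd0 : 0 ≤ graphDist Λ₁ Λ₂ := by
      refine le_trans ?_ (le_max_left _ _)
      apply Real.iSup_nonneg
      intro f₁
      apply Real.iInf_nonneg
      intro f₂
      exact div_nonneg (pairNorm_nonneg _ _) (pairNorm_nonneg _ _)
    have hbddS : BddAbove (Set.range fun f₁ : {x : H // x ≠ 0} =>
        ⨅ f₂ : H, pairNorm ((f₁ : H) - f₂) (Λ₁ (f₁ : H) - Λ₂ f₂)
          / pairNorm (f₁ : H) (Λ₁ (f₁ : H))) := by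
      refine ⟨‖Λ₁ - Λ₂‖, ?_⟩
      rintro x ⟨f₁, rfl⟩
      exact hterm₁ f₁
    rw [div_le_iff₀ (by positivity)]
    refine (Λ₁ - Λ₂).opNorm_le_bound (by positivity) ?_
    intro f
    by_cases hf : f = 0
    · simp [hf]
    · have hfpos : 0 < ‖f‖ := norm_pos_iff.mpr hf
      have hkey : ∀ f₂ : H, ‖(Λ₁ - Λ₂) f‖ / (C₁ * C₂ * ‖f‖)
          ≤ pairNorm (f - f₂) (Λ₁ f - Λ₂ f₂) / pairNorm f (Λ₁ f) := by
        intro f₂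
        have hN : ‖(Λ₁ - Λ₂) f‖ ≤ C₂ * pairNorm (f - f₂) (Λ₁ f - Λ₂ f₂) := by
          have h := aux_key Λ₂ (f - f₂) (Λ₁ f - Λ₂ f₂)
          have heq : (Λ₁ f - Λ₂ f₂) - Λ₂ (f - f₂) = (Λ₁ - Λ₂) f := by
            simp only [map_sub, ContinuousLinearMap.sub_apply]
            abel
          rwa [heq, ← hC₂def] at h
        have hD : pairNorm f (Λ₁ f) ≤ ‖f‖ * C₁ := pairNorm_graph_le Λ₁ f
        have hDpos : 0 < pairNorm f (Λ₁ f) :=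
          lt_of_lt_of_le hfpos (norm_le_pairNorm_graph Λ₁ f)
        rw [div_le_div_iff₀ (by positivity) hDpos]
        calc ‖(Λ₁ - Λ₂) f‖ * pairNorm f (Λ₁ f)
            ≤ (C₂ * pairNorm (f - f₂) (Λ₁ f - Λ₂ f₂)) * (‖f‖ * C₁) :=
              mul_le_mul hN hD hDpos.le (mul_nonneg hC₂pos.le (pairNorm_nonneg _ _))
          _ = pairNorm (f - f₂) (Λ₁ f - Λ₂ f₂) * (C₁ * C₂ * ‖f‖) := by ring
      have hinf : ‖(Λ₁ - Λ₂) f‖ / (C₁ * C₂ * ‖f‖)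
          ≤ ⨅ f₂ : H, pairNorm (f - f₂) (Λ₁ f - Λ₂ f₂) / pairNorm f (Λ₁ f) :=
        le_ciInf hkey
      have hsup := le_ciSup hbddS (⟨f, hf⟩ : {x : H // x ≠ 0})
      have hfin : ‖(Λ₁ - Λ₂) f‖ / (C₁ * C₂ * ‖f‖) ≤ graphDist Λ₁ Λ₂ :=
        ((hinf.trans hsup).trans (le_max_left _ _))
      rw [div_le_iff₀ (by positivity)] at hfin
      calc ‖(Λ₁ - Λ₂) f‖ ≤ graphDist Λ₁ Λ₂ * (C₁ * C₂ * ‖f‖) := hfin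
        _ = graphDist Λ₁ Λ₂ * (C₁ * C₂) * ‖f‖ := by ring
  · -- degenerate case: H has only 0
    have hsub : ∀ x : H, x = 0 := by
      intro x
      by_contra hx
      exact hH ⟨⟨x, hx⟩⟩
    have h0 : Λ₁ - Λ₂ = 0 := by
      ext x
      rw [hsub x]
      simp
    haveI : IsEmpty {x : H // x ≠ 0} := not_nonempty_iff.mp hH
    unfold graphDist
    rw [Real.iSup_of_isEmpty, Real.iSup_of_isEmpty, h0, norm_zero, zero_div]
    simp
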